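/- Let Γ = Cay(Z₈, {±1,±2}) and let n ≥ 6 be even. The automorphism τ of Γ × Cₙ given by (u,i)^τ = (5u+4i, i) does not belong to Aut(Γ) × Aut(Cₙ); hence the pair (Γ, Cₙ) is unstable. -/
import Mathlib


/-- The automorphism group of a graph given by an adjacency relation `A`. -/
def autSubgroup {X : Type*} (A : X → X → Prop) : Subgroup (Equiv.Perm X) where
  carrier := {σ | ∀ x y, A x y ↔ A (σ x) (σ y)}
  one_mem' := fun _ _ => Iff.rfl
  mul_mem' := by
    intro a b ha hb x y
    simpa [Equiv.Perm.mul_apply] using (hb x y).trans (ha (b x) (b y))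
  inv_mem' := by
    intro a ha x y
    have h := ha (a⁻¹ x) (a⁻¹ y)
    simpa using h.symm

/-- The group of two-fold automorphisms (TF-automorphisms) of a graph with
adjacency relation `A`: pairs `(α, β)` of permutations such that
`(s, t)` is an arc iff `(α s, β t)` is an arc. -/
def tfaSubgroup {X : Type*} (A : X → X → Prop) :
    Subgroup (Equiv.Perm X × Equiv.Perm X) where
  carrier := {p | ∀ x y, A x y ↔ A (p.1 x) (p.2 y)}
  one_mem' := fun _ _ => Iff.rfl
  mul_mem' := by
    intro a b ha hb x y
    simpa [Equiv.Perm.mul_apply] using (hb x y).trans (ha (b.1 x) (b.2 y))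
  inv_mem' := by
    intro a ha x y
    have h := ha (a.1⁻¹ x) (a.2⁻¹ y)
    simpa using h.symm

/-- Adjacency of the direct (tensor) product of two graphs. -/
def prodAdj {X Y : Type*} (A : X → X → Prop) (B : Y → Y → Prop) :
    X × Y → X × Y → Prop := fun p q => A p.1 q.1 ∧ B p.2 q.2

/-- Adjacency of the complete graph `K₂` on `Bool`. -/
def k2Adj : Bool → Bool → Prop := fun i j => i ≠ j

/-- Adjacency of the cycle `Cₙ` on `ZMod n`. -/
def cycAdj (n : ℕ) : ZMod n → ZMod n → Prop := fun i j => i = j + 1 ∨ j = i + 1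

/-- Adjacency of the Cayley graph `Cay(Z₈, {±1, ±2})`. -/
def cayAdj : ZMod 8 → ZMod 8 → Prop := fun u v => u - v ∈ ({1, -1, 2, -2} : Set (ZMod 8))


lemma four_mul_mod_two (k : ℕ) : (4 : ZMod 8) * (k : ZMod 8) = 4 * ((k % 2 : ℕ) : ZMod 8) := by
  conv_lhs => rw [← Nat.div_add_mod k 2]
  push_cast
  have h8 : (8 : ZMod 8) = 0 := by decide
  linear_combination ((k / 2 : ℕ) : ZMod 8) * h8

lemma adj_four (n : ℕ) (hn : 6 ≤ n) (hev : Even n) (i j : ZMod n) (h : i = j + 1) :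
    (4 : ZMod 8) * (i.val : ZMod 8) + 4 * (j.val : ZMod 8) = 4 := by
  haveI : NeZero n := ⟨by omega⟩
  haveI : Fact (1 < n) := ⟨by omega⟩
  have h2 : 2 ∣ n := hev.two_dvd
  have hval : i.val % 2 = (j.val + 1) % 2 := by
    subst h
    rw [ZMod.val_add, Nat.mod_mod_of_dvd _ h2, ZMod.val_one]
  rw [four_mul_mod_two i.val, four_mul_mod_two j.val, hval]
  rcases Nat.even_or_odd j.val with he | ho
  · have : j.val % 2 = 0 := Nat.even_iff.mp he
    rw [this, show (j.val + 1) % 2 = 1 by omega]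
    decide
  · have : j.val % 2 = 1 := Nat.odd_iff.mp ho
    rw [this, show (j.val + 1) % 2 = 0 by omega]
    decide

lemma adj_four' (n : ℕ) (hn : 6 ≤ n) (hev : Even n) (i j : ZMod n) (h : cycAdj n i j) :
    (4 : ZMod 8) * (i.val : ZMod 8) + 4 * (j.val : ZMod 8) = 4 := by
  rcases h with h | h
  · exact adj_four n hn hev i j h
  · rw [add_comm]; exact adj_four n hn hev j i h

lemma cay_iff (d : ZMod 8) : cayAdj 0 d ↔ cayAdj 0 (- (5 * d + 4)) := by
  revert d
  simp only [cayAdj, Set.mem_insert_iff, Set.mem_singleton_iff]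
  decide

lemma cay_sub (u v : ZMod 8) : cayAdj u v ↔ cayAdj 0 (v - u) := by
  unfold cayAdj
  constructor <;> intro h <;>
    · simpa [show (0 : ZMod 8) - (v - u) = u - v by ring] using h

/-- Let `Γ = Cay(Z₈, {±1,±2})` and let `n ≥ 6` be even. The automorphism
`τ : (u, i) ↦ (5u + 4i, i)` of `Γ × Cₙ` does not belong to `Aut(Γ) × Aut(Cₙ)`; hence
the pair `(Γ, Cₙ)` is unstable. -/
theorem stmt_12 (n : ℕ) (hn : 6 ≤ n) (hev : Even n)
    (τ : Equiv.Perm (ZMod 8 × ZMod n))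
    (hτ : ∀ (u : ZMod 8) (i : ZMod n), τ (u, i) = (5 * u + 4 * (i.val : ZMod 8), i)) :
    τ ∈ autSubgroup (prodAdj cayAdj (cycAdj n)) ∧
    (¬∃ (σ : Equiv.Perm (ZMod 8)) (ρ : Equiv.Perm (ZMod n)),
        σ ∈ autSubgroup cayAdj ∧ ρ ∈ autSubgroup (cycAdj n) ∧
        ∀ x : ZMod 8 × ZMod n, τ x = (σ x.1, ρ x.2)) ∧
    (∃ τ' ∈ autSubgroup (prodAdj cayAdj (cycAdj n)),
      ¬∃ (σ : Equiv.Perm (ZMod 8)) (ρ : Equiv.Perm (ZMod n)),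
        σ ∈ autSubgroup cayAdj ∧ ρ ∈ autSubgroup (cycAdj n) ∧
        ∀ x : ZMod 8 × ZMod n, τ' x = (σ x.1, ρ x.2)) := by
  haveI : NeZero n := ⟨by omega⟩
  have key : τ ∈ autSubgroup (prodAdj cayAdj (cycAdj n)) := by
    intro x y
    obtain ⟨u, i⟩ := x
    obtain ⟨v, j⟩ := y
    rw [hτ, hτ]
    unfold prodAdj
    constructor
    · rintro ⟨hc, hcy⟩
      refine ⟨?_, hcy⟩
      have h4 := adj_four' n hn hev i j hcy
      have hsub : (5 * v + 4 * (j.val : ZMod 8)) - (5 * u + 4 * (i.val : ZMod 8))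
          = 5 * (v - u) + 4 := by
        have h8 : (8 : ZMod 8) = 0 := by decide
        linear_combination h4 - (i.val : ZMod 8) * h8
      rw [cay_sub] at hc ⊢
      rw [hsub]
      have := (cay_iff (v - u)).mp hc
      have hneg : ∀ w : ZMod 8, cayAdj 0 (-w) → cayAdj 0 w := by
        simp only [cayAdj, Set.mem_insert_iff, Set.mem_singleton_iff]; decide
      exact hneg _ this
    · rintro ⟨hc, hcy⟩
      refine ⟨?_, hcy⟩
      have h4 := adj_four' n hn hev i j hcy
      have hsub : (5 * v + 4 * (j.val : ZMod 8)) - (5 * u + 4 * (i.val : ZMod 8))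
          = 5 * (v - u) + 4 := by
        have h8 : (8 : ZMod 8) = 0 := by decide
        linear_combination h4 - (i.val : ZMod 8) * h8
      rw [cay_sub] at hc ⊢
      rw [hsub] at hc
      have hinv : ∀ w : ZMod 8, cayAdj 0 (5 * w + 4) → cayAdj 0 w := by
        simp only [cayAdj, Set.mem_insert_iff, Set.mem_singleton_iff]; decide
      exact hinv _ hc
  have key2 : ¬∃ (σ : Equiv.Perm (ZMod 8)) (ρ : Equiv.Perm (ZMod n)),
      σ ∈ autSubgroup cayAdj ∧ ρ ∈ autSubgroup (cycAdj n) ∧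
      ∀ x : ZMod 8 × ZMod n, τ x = (σ x.1, ρ x.2) := by
    rintro ⟨σ, ρ, _, _, hall⟩
    have h0 := hall (0, 0)
    have h1 := hall (0, 1)
    rw [hτ] at h0 h1
    have e0 : (5 * 0 + 4 * (((0 : ZMod n).val : ZMod 8)) : ZMod 8) = σ 0 :=
      (Prod.ext_iff.mp h0).1
    have e1 : (5 * 0 + 4 * (((1 : ZMod n).val : ZMod 8)) : ZMod 8) = σ 0 :=
      (Prod.ext_iff.mp h1).1
    rw [ZMod.val_zero] at e0
    rw [ZMod.val_one_eq_one_mod, Nat.mod_eq_of_lt (by omega)] at e1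
    rw [← e0] at e1
    revert e1
    decide
  exact ⟨key, key2, τ, key, key2⟩
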